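/- arXiv:2303.01199 — 9 statements merged into one kernel-verified Lean document; each statement's English description precedes it below -/
import Mathlib

section
/- Let X be a metric space and let S ⊆ C(ℝ,X). Then S satisfies the compactness axiom if and only if the following holds: whenever (t_n, x_n) → (t, x) in ℝ × X as n → ∞ and there exists a sequence of maps φ_n ∈ S with φ_n(t_n) = x_n for all n, there exist a map ψ ∈ S with ψ(t) = x and a subsequence (t_{n_i}, φ_{n_i}) with (t_{n_i}, φ_{n_i}) → (t, ψ) in ℝ × C(ℝ,X) as i → ∞. -/
open Set Filter Topology

namespace AxODE

variable {X : Type*} [MetricSpace X]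

/-- The shift map `σ(t, φ)(s) = φ(s + t)` on `C(ℝ, X)`. -/
def shift (t : ℝ) (φ : C(ℝ, X)) : C(ℝ, X) :=
  ⟨fun s => φ (s + t), φ.continuous.comp (continuous_add_right t)⟩

/-- The evaluation map `e_S : ℝ × S → ℝ × X`, `e_S(t, φ) = (t, φ(t))`. -/
def evalMap (S : Set C(ℝ, X)) : ℝ × S → ℝ × X :=
  fun p => (p.1, (p.2 : C(ℝ, X)) p.1)

/-- `S` satisfies the compactness axiom if `e_S` is proper, i.e. the preimage under `e_S`
of every compact subset of `ℝ × X` is compact. -/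
def CompactnessAxiom (S : Set C(ℝ, X)) : Prop :=
  ∀ K : Set (ℝ × X), IsCompact K → IsCompact (evalMap S ⁻¹' K)

theorem compactnessAxiom_iff_seq (S : Set C(ℝ, X)) :
    CompactnessAxiom S ↔
      ∀ (tn : ℕ → ℝ) (xn : ℕ → X) (t : ℝ) (x : X) (φn : ℕ → C(ℝ, X)),
        Tendsto (fun n => (tn n, xn n)) atTop (𝓝 (t, x)) →
        (∀ n, φn n ∈ S) → (∀ n, φn n (tn n) = xn n) →
        ∃ ψ ∈ S, ψ t = x ∧ ∃ ni : ℕ → ℕ, StrictMono ni ∧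
          Tendsto (fun i => (tn (ni i), φn (ni i))) atTop (𝓝 (t, ψ)) := by
  haveI : IsCountablyGenerated (uniformity S) := Filter.comap.isCountablyGenerated _ _
  constructor
  · intro h tn xn t x φn hconv hmem heq
    have hK : IsCompact (insert (t, x) (range fun n => (tn n, xn n))) :=
      hconv.isCompact_insert_range
    have hpre := (h _ hK).isSeqCompact
    set u : ℕ → ℝ × S := fun n => (tn n, ⟨φn n, hmem n⟩) with hu
    have hmemPre : ∀ n, u n ∈ evalMap S ⁻¹' insert (t, x) (range fun n => (tn n, xn n)) := by
      intro n
      simp only [mem_preimage, evalMap, hu, heq n]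
      exact Or.inr ⟨n, rfl⟩
    obtain ⟨p, hpmem, ni, hmono, hlim⟩ := hpre hmemPre
    obtain ⟨t', ψ⟩ := p
    have hfst : Tendsto (fun i => tn (ni i)) atTop (𝓝 t') :=
      (continuous_fst.tendsto _).comp hlim
    have ht' : t' = t :=
      tendsto_nhds_unique hfst (((continuous_fst.tendsto _).comp hconv).comp hmono.tendsto_atTop)
    have hlim' : Tendsto (fun i => (tn (ni i), φn (ni i))) atTop (𝓝 (t', (ψ : C(ℝ, X)))) := by
      have : Continuous (fun q : ℝ × S => (q.1, (q.2 : C(ℝ, X)))) :=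
        continuous_fst.prodMk (continuous_subtype_val.comp continuous_snd)
      exact (this.tendsto _).comp hlim
    have heval : Tendsto (fun i => φn (ni i) (tn (ni i))) atTop (𝓝 ((ψ : C(ℝ, X)) t')) := by
      have hc : Continuous (fun q : ℝ × C(ℝ, X) => q.2 q.1) :=
        continuous_eval.comp continuous_swap
      exact (hc.tendsto _).comp hlim'
    have hx : Tendsto (fun i => φn (ni i) (tn (ni i))) atTop (𝓝 x) := by
      have := ((continuous_snd.tendsto _).comp hconv).comp hmono.tendsto_atTop
      simpa [Function.comp_def, heq] using this
    have hψx : (ψ : C(ℝ, X)) t = x := by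
      rw [← ht']; exact tendsto_nhds_unique heval hx
    exact ⟨ψ, ψ.2, hψx, ni, hmono, ht' ▸ hlim'⟩
  · intro h K hK
    apply IsSeqCompact.isCompact
    intro u humem
    have hKseq := hK.isSeqCompact
    obtain ⟨⟨t, x⟩, hKmem, ni, hmono, hlim⟩ := hKseq humem
    set tn : ℕ → ℝ := fun i => (u (ni i)).1
    set φn : ℕ → C(ℝ, X) := fun i => ((u (ni i)).2 : C(ℝ, X))
    have hconv : Tendsto (fun i => (tn i, φn i (tn i))) atTop (𝓝 (t, x)) := hlim
    obtain ⟨ψ, hψS, hψx, mj, hmonoj, hlimj⟩ :=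
      h tn (fun i => φn i (tn i)) t x φn hconv (fun i => (u (ni i)).2.2) (fun _ => rfl)
    refine ⟨(t, ⟨ψ, hψS⟩), ?_, ni ∘ mj, hmono.comp hmonoj, ?_⟩
    · simpa [evalMap, hψx] using hKmem
    · rw [nhds_prod_eq]
      refine Tendsto.prodMk ?_ ?_
      · exact (continuous_fst.tendsto _).comp hlimj
      · rw [tendsto_subtype_rng]
        exact (continuous_snd.tendsto _).comp hlimj

end AxODE
end

section
/- Let X be a metric space. If a subset S ⊆ C(ℝ,X) satisfies the compactness axiom, then S is a closed subset of C(ℝ,X). -/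
open Set Filter Topology

namespace AxODE

variable {X : Type*} [MetricSpace X]

theorem isClosed_of_compactnessAxiom (S : Set C(ℝ, X)) (hS : CompactnessAxiom S) :
    IsClosed S := by
  rw [← closure_subset_iff_isClosed]
  intro φ hφ
  -- C(ℝ, X) is first countable, so extract a sequence in S converging to φ
  obtain ⟨u, huS, hu⟩ := mem_closure_iff_seq_limit.mp hφ
  -- The values `u n 0` together with `φ 0` form a compact set
  have hval : Tendsto (fun n => u n 0) atTop (𝓝 (φ 0)) :=
    (ContinuousEvalConst.continuous_eval_const (0 : ℝ)).continuousAt.tendsto.comp hu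
  have hA : IsCompact (insert (φ 0) (Set.range fun n => u n 0)) :=
    hval.isCompact_insert_range
  have hK : IsCompact (({(0 : ℝ)} : Set ℝ) ×ˢ insert (φ 0) (Set.range fun n => u n 0)) :=
    isCompact_singleton.prod hA
  have hC := hS _ hK
  -- The sequence `(0, u n)` lives in this compact preimage
  set p : ℕ → ℝ × S := fun n => (0, ⟨u n, huS n⟩) with hp
  have hpC : ∀ n, p n ∈ evalMap S ⁻¹' (({(0 : ℝ)} : Set ℝ) ×ˢ insert (φ 0) (Set.range fun n => u n 0)) := by
    intro n
    simp [evalMap, p]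
  -- Extract a cluster point
  obtain ⟨q, hqC, hq⟩ := hC.exists_mapClusterPt (le_principal_iff.mpr
    (Filter.mem_map.mpr (Filter.eventually_atTop.mpr ⟨0, fun n _ => hpC n⟩)))
  -- Its second coordinate is a cluster point of `u n` in `S`, hence of `↑(u n)` in C(ℝ,X)
  have h2 : MapClusterPt q.2 atTop (fun n => (⟨u n, huS n⟩ : S)) := by
    have := hq.continuousAt_comp (f := Prod.snd) continuous_snd.continuousAt
    simpa [p, Function.comp_def] using this
  have h3 : MapClusterPt (q.2 : C(ℝ, X)) atTop u := by
    have := h2.continuousAt_comp (f := (Subtype.val : S → C(ℝ, X)))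
      continuous_subtype_val.continuousAt
    simpa [Function.comp_def] using this
  -- Cluster point of a convergent sequence equals the limit (T2)
  have : (q.2 : C(ℝ, X)) = φ := by
    have hne : (𝓝 (q.2 : C(ℝ, X)) ⊓ 𝓝 φ).NeBot := by
      have : NeBot (𝓝 (q.2 : C(ℝ, X)) ⊓ Filter.map u atTop) := h3
      exact this.mono (inf_le_inf_left _ hu)
    exact eq_of_nhds_neBot hne
  exact this ▸ q.2.2

end AxODE
end

section
/- Let X be a compact metric space. A subset S ⊆ C(ℝ,X) is compact (in the compact-open topology) if and only if S satisfies the compactness axiom. -/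
open Set Filter Topology

namespace AxODE

variable {X : Type*} [MetricSpace X]

theorem isCompact_iff_compactnessAxiom [CompactSpace X] (S : Set C(ℝ, X)) :
    IsCompact S ↔ CompactnessAxiom S := by
  have hcont : Continuous (evalMap S) := by
    unfold evalMap
    exact continuous_fst.prodMk (continuous_eval.comp
      ((continuous_subtype_val.comp continuous_snd).prodMk continuous_fst))
  constructor
  · intro hS K hK
    have hSc : CompactSpace S := isCompact_iff_compactSpace.mp hS
    have hsub : evalMap S ⁻¹' K ⊆ (Prod.fst '' K) ×ˢ (univ : Set S) := by
      rintro ⟨t, φ⟩ hp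
      exact ⟨⟨_, hp, rfl⟩, mem_univ _⟩
    exact ((hK.image continuous_fst).prod isCompact_univ).of_isClosed_subset
      (hK.isClosed.preimage hcont) hsub
  · intro h
    have hK : IsCompact (({0} : Set ℝ) ×ˢ (univ : Set X)) :=
      isCompact_singleton.prod isCompact_univ
    have hpre := h _ hK
    have heq : evalMap S ⁻¹' (({0} : Set ℝ) ×ˢ (univ : Set X))
        = ({0} : Set ℝ) ×ˢ (univ : Set S) := by
      ext ⟨t, φ⟩; simp [evalMap]
    rw [heq] at hpre
    have himg : Prod.snd '' (({0} : Set ℝ) ×ˢ (univ : Set S)) = (univ : Set S) := by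
      ext φ
      simp only [mem_image, mem_prod, mem_singleton_iff, mem_univ, iff_true]
      exact ⟨(0, φ), ⟨rfl, trivial⟩, rfl⟩
    rw [isCompact_iff_isCompact_univ, ← himg]
    exact hpre.image continuous_snd

end AxODE
end

section
/- Let X be a compact metric space and S ⊆ C(ℝ,X) a shift-invariant set. Say a shift-invariant subset S' ⊆ S is maximal with respect to phase space if every shift-invariant subset S'' ⊆ S with π(S'') = π(S') satisfies S'' ⊆ S'. Then the assignment S' ↦ π(S') is a bijection from the family {S' ⊆ S : S' is shift-invariant and maximal with respect to phase space} onto the family {A ⊆ X : A is weakly invariant with respect to S}. -/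
open Set Filter Topology

namespace AxODE

variable {X : Type*} [MetricSpace X]

/-- `S` is shift-invariant if `σ(t, φ) ∈ S` for all `t ∈ ℝ` and `φ ∈ S`. -/
def ShiftInvariant (S : Set C(ℝ, X)) : Prop :=
  ∀ (t : ℝ), ∀ φ ∈ S, shift t φ ∈ S

/-- Evaluation at `0`. -/
def π : C(ℝ, X) → X := fun φ => φ 0

/-- `A` is weakly invariant with respect to `S`. -/
def WeaklyInvariant (S : Set C(ℝ, X)) (A : Set X) : Prop :=
  ∀ x ∈ A, ∃ φ ∈ S, φ 0 = x ∧ Set.range ⇑φ ⊆ A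

/-- A shift-invariant subset `S' ⊆ S` is maximal with respect to phase space if every
shift-invariant subset `S'' ⊆ S` with `π(S'') = π(S')` satisfies `S'' ⊆ S'`. -/
def MaximalWrtPhaseSpace (S S' : Set C(ℝ, X)) : Prop :=
  ∀ S'' ⊆ S, ShiftInvariant S'' → π '' S'' = π '' S' → S'' ⊆ S'

theorem bijOn_image_eval [CompactSpace X] (S : Set C(ℝ, X)) (hS : ShiftInvariant S) :
    Set.BijOn (fun S' : Set C(ℝ, X) => π '' S')
      {S' | S' ⊆ S ∧ ShiftInvariant S' ∧ MaximalWrtPhaseSpace S S'}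
      {A : Set X | WeaklyInvariant S A} := by
  have key : ∀ (S' : Set C(ℝ, X)) (φ : C(ℝ, X)), ShiftInvariant S' → φ ∈ S' →
      Set.range ⇑φ ⊆ π '' S' := by
    rintro S' φ hinv hφ _ ⟨t, rfl⟩
    exact ⟨shift t φ, hinv t φ hφ, by simp [π, shift]⟩
  have maps : ∀ S' ∈ {S' | S' ⊆ S ∧ ShiftInvariant S' ∧ MaximalWrtPhaseSpace S S'},
      π '' S' ∈ {A : Set X | WeaklyInvariant S A} := by
    rintro S' ⟨hsub, hinv, -⟩ x ⟨φ, hφ, rfl⟩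
    exact ⟨φ, hsub hφ, rfl, key S' φ hinv hφ⟩
  refine ⟨maps, ?_, ?_⟩
  · rintro S1 ⟨h1sub, h1inv, h1max⟩ S2 ⟨h2sub, h2inv, h2max⟩ heq
    exact le_antisymm (h2max S1 h1sub h1inv heq) (h1max S2 h2sub h2inv heq.symm)
  · rintro A (hA : WeaklyInvariant S A)
    refine ⟨{φ | φ ∈ S ∧ Set.range ⇑φ ⊆ A}, ⟨fun φ h => h.1, ?_, ?_⟩, ?_⟩
    · rintro t φ ⟨hφS, hφA⟩
      refine ⟨hS t φ hφS, ?_⟩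
      rintro _ ⟨s, rfl⟩
      exact hφA ⟨s + t, rfl⟩
    · rintro S'' hsub hinv heq φ hφ
      refine ⟨hsub hφ, fun x hx => ?_⟩
      have : x ∈ π '' S'' := key S'' φ hinv hφ hx
      rw [heq] at this
      obtain ⟨ψ, ⟨-, hψA⟩, rfl⟩ := this
      exact hψA ⟨0, rfl⟩
    · apply Set.eq_of_subset_of_subset
      · rintro _ ⟨φ, ⟨-, hφA⟩, rfl⟩
        exact hφA ⟨0, rfl⟩
      · intro x hx
        obtain ⟨φ, hφS, hφ0, hφA⟩ := hA x hx
        exact ⟨φ, ⟨hφS, hφA⟩, hφ0⟩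

end AxODE
end

section
/- Let X be a metric space and S ⊆ C(ℝ,X) a set satisfying the compactness axiom and satisfying the existence axiom on A, i.e., for every x ∈ A there exists φ ∈ S with φ(0) = x. If A ⊆ X is compact, then the A-section S_A = {φ ∈ S : φ(0) ∈ A} is compact in C(ℝ,X). -/
open Set Filter Topology

namespace AxODE

variable {X : Type*} [MetricSpace X]

theorem isCompact_section (S : Set C(ℝ, X)) (hcpt : CompactnessAxiom S)
    (A : Set X) (hex : ∀ x ∈ A, ∃ φ ∈ S, φ 0 = x) (hA : IsCompact A) :
    IsCompact {φ ∈ S | φ 0 ∈ A} := by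
  have h1 : IsCompact (evalMap S ⁻¹' (({0} : Set ℝ) ×ˢ A)) :=
    hcpt _ (isCompact_singleton.prod hA)
  have h2 : IsCompact ((Subtype.val ∘ Prod.snd) '' (evalMap S ⁻¹' (({0} : Set ℝ) ×ˢ A))) :=
    h1.image (continuous_subtype_val.comp continuous_snd)
  convert h2 using 1
  ext φ
  simp only [Set.mem_setOf_eq, Set.mem_image, Function.comp_apply, Set.mem_preimage,
    Set.mem_prod, Set.mem_singleton_iff, evalMap]
  constructor
  · rintro ⟨hS, hA0⟩
    exact ⟨(0, ⟨φ, hS⟩), ⟨rfl, hA0⟩, rfl⟩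
  · rintro ⟨⟨t, ψ⟩, ⟨ht, hψ⟩, rfl⟩
    subst ht
    exact ⟨ψ.2, hψ⟩

end AxODE
end

section
/- Let X be a metric space and S ⊆ C(ℝ,X) a shift-invariant set satisfying the compactness axiom. A subset A ⊆ X is strongly invariant with respect to S if and only if the A-section S_A = {φ ∈ S : φ(0) ∈ A} is shift-invariant. -/
open Set Filter Topology

namespace AxODE

variable {X : Type*} [MetricSpace X]

/-- `A` is strongly invariant with respect to `S`. -/
def StronglyInvariant (S : Set C(ℝ, X)) (A : Set X) : Prop :=
  ∀ φ ∈ S, φ 0 ∈ A → Set.range ⇑φ ⊆ A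

theorem stronglyInvariant_iff_section_shiftInvariant (S : Set C(ℝ, X))
    (hS : ShiftInvariant S) (hcpt : CompactnessAxiom S) (A : Set X) :
    StronglyInvariant S A ↔ ShiftInvariant {φ ∈ S | φ 0 ∈ A} := by
  constructor
  · intro h t φ hφ
    refine ⟨hS t φ hφ.1, ?_⟩
    show φ (0 + t) ∈ A
    exact h φ hφ.1 hφ.2 (mem_range_self _)
  · intro h φ hφ h0
    rintro x ⟨t, rfl⟩
    have := (h t φ ⟨hφ, h0⟩).2
    simpa [shift] using this

end AxODE
end

section
/- Let X be a metric space and S ⊆ C(ℝ,X) a shift-invariant set satisfying the compactness axiom. Then for every subset B ⊆ S: Λ⁺(B) = π(ω(B)) and Λ⁻(B) = π(α(B)), where Λ⁺(B) = {y ∈ X : there exist φ_n ∈ B and t_n → +∞ with φ_n(t_n) → y}, Λ⁻(B) = {y ∈ X : there exist φ_n ∈ B and t_n → −∞ with φ_n(t_n) → y}, ω(B) = ⋂_{t>0} closure(⋃_{s≥t} σ(s,B)), and α(B) = ⋂_{t<0} closure(⋃_{s≤t} σ(s,B)). -/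
open Set Filter Topology

namespace AxODE

variable {X : Type*} [MetricSpace X]

/-- `ω(B) = ⋂_{t>0} closure (⋃_{s ≥ t} σ(s, B))`, taken in `C(ℝ, X)`. -/
def omegaSet (B : Set C(ℝ, X)) : Set C(ℝ, X) :=
  ⋂ t ∈ Set.Ioi (0 : ℝ), closure (⋃ s ∈ Set.Ici t, shift s '' B)

/-- `α(B) = ⋂_{t<0} closure (⋃_{s ≤ t} σ(s, B))`, taken in `C(ℝ, X)`. -/
def alphaSet (B : Set C(ℝ, X)) : Set C(ℝ, X) :=
  ⋂ t ∈ Set.Iio (0 : ℝ), closure (⋃ s ∈ Set.Iic t, shift s '' B)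

/-- `Λ⁺(B)`: points `y ∈ X` such that `φ_n(t_n) → y` for some `φ_n ∈ B`, `t_n → +∞`. -/
def LambdaPlus (B : Set C(ℝ, X)) : Set X :=
  {y | ∃ (φn : ℕ → C(ℝ, X)) (tn : ℕ → ℝ), (∀ n, φn n ∈ B) ∧
    Tendsto tn atTop atTop ∧ Tendsto (fun n => φn n (tn n)) atTop (𝓝 y)}

/-- `Λ⁻(B)`: points `y ∈ X` such that `φ_n(t_n) → y` for some `φ_n ∈ B`, `t_n → −∞`. -/
def LambdaMinus (B : Set C(ℝ, X)) : Set X :=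
  {y | ∃ (φn : ℕ → C(ℝ, X)) (tn : ℕ → ℝ), (∀ n, φn n ∈ B) ∧
    Tendsto tn atTop atBot ∧ Tendsto (fun n => φn n (tn n)) atTop (𝓝 y)}

private lemma shift_apply_zero (s : ℝ) (φ : C(ℝ, X)) : shift s φ 0 = φ s := by
  simp [shift]

/-- `π(ω(B)) ⊆ Λ⁺(B)`. -/
private lemma pi_omega_subset (B : Set C(ℝ, X)) :
    (fun φ : C(ℝ, X) => φ 0) '' omegaSet B ⊆ LambdaPlus B := by
  rintro y ⟨φ, hφ, rfl⟩
  have key : ∀ n : ℕ, ∃ (χ : C(ℝ, X)) (s : ℝ), χ ∈ B ∧ (n : ℝ) + 1 ≤ s ∧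
      dist (χ s) (φ 0) < 1 / ((n : ℝ) + 1) := by
    intro n
    have h1 : φ ∈ closure (⋃ s ∈ Set.Ici ((n : ℝ) + 1), shift s '' B) :=
      mem_iInter₂.1 hφ ((n : ℝ) + 1) (mem_Ioi.2 (by positivity))
    have hVopen : IsOpen ((fun ψ : C(ℝ, X) => ψ 0) ⁻¹' Metric.ball (φ 0) (1 / ((n : ℝ) + 1))) :=
      Metric.isOpen_ball.preimage (continuous_eval_const 0)
    have hφV : φ ∈ (fun ψ : C(ℝ, X) => ψ 0) ⁻¹' Metric.ball (φ 0) (1 / ((n : ℝ) + 1)) := by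
      simp only [mem_preimage, Metric.mem_ball, dist_self]
      positivity
    obtain ⟨ψ, hψV, hψU⟩ := _root_.mem_closure_iff.1 h1 _ hVopen hφV
    obtain ⟨s, hs, χ, hχ, rfl⟩ := by
      simpa only [mem_iUnion, exists_prop, mem_image] using hψU
    exact ⟨χ, s, hχ, hs, by simpa [shift_apply_zero] using hψV⟩
  choose φn tn hmem hge hdist using key
  refine ⟨φn, tn, hmem, ?_, ?_⟩
  · exact tendsto_atTop_mono hge
      (tendsto_atTop_add_const_right _ 1 tendsto_natCast_atTop_atTop)
  · rw [tendsto_iff_dist_tendsto_zero]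
    exact squeeze_zero (fun n => dist_nonneg) (fun n => (hdist n).le)
      tendsto_one_div_add_atTop_nhds_zero_nat

/-- `π(α(B)) ⊆ Λ⁻(B)`. -/
private lemma pi_alpha_subset (B : Set C(ℝ, X)) :
    (fun φ : C(ℝ, X) => φ 0) '' alphaSet B ⊆ LambdaMinus B := by
  rintro y ⟨φ, hφ, rfl⟩
  have key : ∀ n : ℕ, ∃ (χ : C(ℝ, X)) (s : ℝ), χ ∈ B ∧ s ≤ -((n : ℝ) + 1) ∧
      dist (χ s) (φ 0) < 1 / ((n : ℝ) + 1) := by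
    intro n
    have h1 : φ ∈ closure (⋃ s ∈ Set.Iic (-((n : ℝ) + 1)), shift s '' B) :=
      mem_iInter₂.1 hφ (-((n : ℝ) + 1)) (mem_Iio.2 (neg_lt_zero.2 (by positivity)))
    have hVopen : IsOpen ((fun ψ : C(ℝ, X) => ψ 0) ⁻¹' Metric.ball (φ 0) (1 / ((n : ℝ) + 1))) :=
      Metric.isOpen_ball.preimage (continuous_eval_const 0)
    have hφV : φ ∈ (fun ψ : C(ℝ, X) => ψ 0) ⁻¹' Metric.ball (φ 0) (1 / ((n : ℝ) + 1)) := by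
      simp only [mem_preimage, Metric.mem_ball, dist_self]
      positivity
    obtain ⟨ψ, hψV, hψU⟩ := _root_.mem_closure_iff.1 h1 _ hVopen hφV
    obtain ⟨s, hs, χ, hχ, rfl⟩ := by
      simpa only [mem_iUnion, exists_prop, mem_image] using hψU
    exact ⟨χ, s, hχ, hs, by simpa [shift_apply_zero] using hψV⟩
  choose φn tn hmem hle hdist using key
  refine ⟨φn, tn, hmem, ?_, ?_⟩
  · refine tendsto_atBot_mono hle ?_
    exact tendsto_neg_atBot_iff.2
      (tendsto_atTop_add_const_right _ 1 tendsto_natCast_atTop_atTop)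
  · rw [tendsto_iff_dist_tendsto_zero]
    exact squeeze_zero (fun n => dist_nonneg) (fun n => (hdist n).le)
      tendsto_one_div_add_atTop_nhds_zero_nat

/-- Common part: extract a cluster point of the shifted sequence. -/
private lemma exists_clusterPt_shift (S : Set C(ℝ, X)) (hS : ShiftInvariant S)
    (hcpt : CompactnessAxiom S) (B : Set C(ℝ, X)) (hB : B ⊆ S) {y : X}
    (φn : ℕ → C(ℝ, X)) (tn : ℕ → ℝ) (hφn : ∀ n, φn n ∈ B)
    (hconv : Tendsto (fun n => φn n (tn n)) atTop (𝓝 y)) :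
    ∃ φ : C(ℝ, X), φ 0 = y ∧
      ClusterPt φ (Filter.map (fun n => shift (tn n) (φn n)) atTop) := by
  set ψ : ℕ → C(ℝ, X) := fun n => shift (tn n) (φn n) with hψdef
  have hψS : ∀ n, ψ n ∈ S := fun n => hS _ _ (hB (hφn n))
  have hψ0 : ∀ n, ψ n 0 = φn n (tn n) := fun n => shift_apply_zero _ _
  have hK : IsCompact (({(0 : ℝ)} : Set ℝ) ×ˢ
      insert y (Set.range fun n => φn n (tn n))) :=
    isCompact_singleton.prod hconv.isCompact_insert_range
  have hT := hcpt _ hK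
  set u : ℕ → ℝ × S := fun n => (0, ⟨ψ n, hψS n⟩) with hudef
  have hu : ∀ n, u n ∈ evalMap S ⁻¹'
      (({(0 : ℝ)} : Set ℝ) ×ˢ insert y (Set.range fun n => φn n (tn n))) := by
    intro n
    simp only [mem_preimage, evalMap, hudef, prodMk_mem_set_prod_eq, mem_singleton_iff,
      true_and]
    exact Or.inr ⟨n, (hψ0 n).symm⟩
  have hle : Filter.map u atTop ≤ 𝓟 (evalMap S ⁻¹'
      (({(0 : ℝ)} : Set ℝ) ×ˢ insert y (Set.range fun n => φn n (tn n)))) :=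
    le_principal_iff.2 (mem_map.2 (Eventually.of_forall hu))
  obtain ⟨p, -, hp⟩ := hT.exists_clusterPt hle
  refine ⟨(p.2 : C(ℝ, X)), ?_, ?_⟩
  · -- φ 0 = y
    have hc : Continuous fun q : ℝ × S => ((q.2 : C(ℝ, X)) 0 : X) :=
      (continuous_eval_const 0).comp (continuous_subtype_val.comp continuous_snd)
    have hcl : ClusterPt ((p.2 : C(ℝ, X)) 0) (𝓝 y) := by
      refine hp.map hc.continuousAt ?_
      rw [Filter.tendsto_map'_iff]
      exact Tendsto.congr (fun n => (hψ0 n).symm) hconv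
    exact eq_of_nhds_neBot hcl
  · -- cluster point of ψ
    have hc : Continuous fun q : ℝ × S => (q.2 : C(ℝ, X)) :=
      continuous_subtype_val.comp continuous_snd
    refine hp.map hc.continuousAt ?_
    rw [Filter.tendsto_map'_iff]
    exact tendsto_map

private lemma lambdaPlus_subset (S : Set C(ℝ, X)) (hS : ShiftInvariant S)
    (hcpt : CompactnessAxiom S) (B : Set C(ℝ, X)) (hB : B ⊆ S) :
    LambdaPlus B ⊆ (fun φ : C(ℝ, X) => φ 0) '' omegaSet B := by
  rintro y ⟨φn, tn, hφn, htn, hconv⟩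
  obtain ⟨φ, hφ0, hcl⟩ := exists_clusterPt_shift S hS hcpt B hB φn tn hφn hconv
  refine ⟨φ, ?_, hφ0⟩
  rw [omegaSet, mem_iInter₂]
  intro t _
  rw [mem_closure_iff_clusterPt]
  refine hcl.mono (le_principal_iff.2 ?_)
  rw [mem_map]
  filter_upwards [htn.eventually_ge_atTop t] with n hn
  exact mem_biUnion hn ⟨φn n, hφn n, rfl⟩

private lemma lambdaMinus_subset (S : Set C(ℝ, X)) (hS : ShiftInvariant S)
    (hcpt : CompactnessAxiom S) (B : Set C(ℝ, X)) (hB : B ⊆ S) :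
    LambdaMinus B ⊆ (fun φ : C(ℝ, X) => φ 0) '' alphaSet B := by
  rintro y ⟨φn, tn, hφn, htn, hconv⟩
  obtain ⟨φ, hφ0, hcl⟩ := exists_clusterPt_shift S hS hcpt B hB φn tn hφn hconv
  refine ⟨φ, ?_, hφ0⟩
  rw [alphaSet, mem_iInter₂]
  intro t _
  rw [mem_closure_iff_clusterPt]
  refine hcl.mono (le_principal_iff.2 ?_)
  rw [mem_map]
  filter_upwards [htn.eventually_le_atBot t] with n hn
  exact mem_biUnion hn ⟨φn n, hφn n, rfl⟩

theorem lambda_eq_image_limitSet (S : Set C(ℝ, X)) (hS : ShiftInvariant S)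
    (hcpt : CompactnessAxiom S) (B : Set C(ℝ, X)) (hB : B ⊆ S) :
    LambdaPlus B = (fun φ : C(ℝ, X) => φ 0) '' omegaSet B ∧
    LambdaMinus B = (fun φ : C(ℝ, X) => φ 0) '' alphaSet B := by
  constructor
  · exact Subset.antisymm (lambdaPlus_subset S hS hcpt B hB) (pi_omega_subset B)
  · exact Subset.antisymm (lambdaMinus_subset S hS hcpt B hB) (pi_alpha_subset B)

end AxODE
end

section
/- Let X be a metric space and S ⊆ C(ℝ,X) a shift-invariant set satisfying the compactness axiom. If a compact subset K ⊆ X is weakly invariant with respect to S, then ω_S(x) ≠ ∅ for every x ∈ K. -/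
open Set Filter Topology

namespace AxODE

variable {X : Type*} [MetricSpace X]

/-- `ω_S(x) = π(ω(S_x))` where `S_x = {φ ∈ S : φ(0) = x}`. -/
def omegaS (S : Set C(ℝ, X)) (x : X) : Set X :=
  (fun φ : C(ℝ, X) => φ 0) '' omegaSet {φ ∈ S | φ 0 = x}

theorem omegaS_nonempty_of_weaklyInvariant_compact (S : Set C(ℝ, X))
    (hS : ShiftInvariant S) (hcpt : CompactnessAxiom S) (K : Set X)
    (hK : IsCompact K) (hKinv : WeaklyInvariant S K) :
    ∀ x ∈ K, (omegaS S x).Nonempty := by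
  intro x hx
  obtain ⟨φ, hφS, hφ0, hφK⟩ := hKinv x hx
  -- the set D of elements of S taking value in K at time 0 is compact
  have hP : IsCompact (evalMap S ⁻¹' ({(0 : ℝ)} ×ˢ K)) :=
    hcpt _ (isCompact_singleton.prod hK)
  set D : Set C(ℝ, X) :=
    (fun p : ℝ × S => (p.2 : C(ℝ, X))) '' (evalMap S ⁻¹' ({(0 : ℝ)} ×ˢ K)) with hDdef
  have hD : IsCompact D := hP.image (continuous_subtype_val.comp continuous_snd)
  set Sx : Set C(ℝ, X) := {ψ ∈ S | ψ 0 = x} with hSxdef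
  have hφSx : φ ∈ Sx := ⟨hφS, hφ0⟩
  set F : Ioi (0 : ℝ) → Set C(ℝ, X) :=
    fun t => closure (⋃ s ∈ Set.Ici t.1, shift s '' Sx) ∩ D with hFdef
  have hshiftD : ∀ t : ℝ, shift t φ ∈ D := by
    intro t
    refine ⟨(0, ⟨shift t φ, hS t φ hφS⟩), ?_, rfl⟩
    simp only [mem_preimage, evalMap, mem_prod, mem_singleton_iff, true_and]
    show (shift t φ) 0 ∈ K
    simp only [shift, ContinuousMap.coe_mk, zero_add]
    exact hφK (mem_range_self t)
  have hFne : ∀ t : Ioi (0 : ℝ), (F t).Nonempty := fun t =>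
    ⟨shift t.1 φ,
      subset_closure (mem_biUnion self_mem_Ici ⟨φ, hφSx, rfl⟩), hshiftD t.1⟩
  have hFcl : ∀ t, IsClosed (F t) := fun t => isClosed_closure.inter hD.isClosed
  have hFc : ∀ t, IsCompact (F t) := fun t => hD.inter_left isClosed_closure
  have hmono : ∀ a b : Ioi (0 : ℝ), a.1 ≤ b.1 → F b ⊆ F a := by
    intro a b hab
    refine inter_subset_inter_left _ (closure_mono ?_)
    exact biUnion_subset_biUnion_left (Ici_subset_Ici.2 hab)
  have hdir : Directed (· ⊇ ·) F := by
    intro a b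
    refine ⟨⟨max a.1 b.1, show (0:ℝ) < max a.1 b.1 from lt_max_of_lt_left (mem_Ioi.1 a.2)⟩, ?_, ?_⟩
    · exact hmono a _ (le_max_left _ _)
    · exact hmono b _ (le_max_right _ _)
  have : (⋂ t, F t).Nonempty :=
    IsCompact.nonempty_iInter_of_directed_nonempty_isCompact_isClosed F hdir hFne hFc hFcl
  obtain ⟨ψ, hψ⟩ := this
  refine ⟨ψ 0, ⟨ψ, ?_, rfl⟩⟩
  simp only [omegaSet, mem_iInter]
  intro t ht
  exact (mem_iInter.1 hψ ⟨t, ht⟩).1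

end AxODE
end

section
/- Let X be a metric space and S ⊆ C(ℝ,X) a shift-invariant set satisfying the compactness axiom. Then for every x ∈ X, the limit sets ω_S(x) = π(ω(S_x)) and α_S(x) = π(α(S_x)) are closed subsets of X and are weakly invariant with respect to S. -/
open Set Filter Topology

namespace AxODE

variable {X : Type*} [MetricSpace X]

/-- `α_S(x) = π(α(S_x))` where `S_x = {φ ∈ S : φ(0) = x}`. -/
def alphaS (S : Set C(ℝ, X)) (x : X) : Set X :=
  (fun φ : C(ℝ, X) => φ 0) '' alphaSet {φ ∈ S | φ 0 = x}

lemma continuous_shift (t : ℝ) : Continuous (shift (X := X) t) :=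
  ContinuousMap.continuous_precomp ⟨fun s => s + t, continuous_add_right t⟩

lemma shift_shift (r s : ℝ) (φ : C(ℝ, X)) : shift r (shift s φ) = shift (s + r) φ := by
  ext u
  show φ (u + r + s) = φ (u + (s + r))
  ring_nf

lemma continuous_evalMap (S : Set C(ℝ, X)) : Continuous (evalMap S) :=
  continuous_fst.prodMk <|
    continuous_eval.comp ((continuous_subtype_val.comp continuous_snd).prodMk continuous_fst)

lemma properMap_evalMap {S : Set C(ℝ, X)} (hcpt : CompactnessAxiom S) :
    IsProperMap (evalMap S) :=
  isProperMap_iff_isCompact_preimage.mpr ⟨continuous_evalMap S, fun {K} hK => hcpt K hK⟩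

/-- Key cluster point lemma from the compactness axiom. -/
lemma exists_clusterPt {S : Set C(ℝ, X)} (hcpt : CompactnessAxiom S)
    {F : Filter C(ℝ, X)} [hne : F.NeBot] (hFS : F ≤ 𝓟 S) {y : X}
    (hy : Tendsto (fun φ : C(ℝ, X) => φ 0) F (𝓝 y)) :
    ∃ φ ∈ S, φ 0 = y ∧ ClusterPt φ F := by
  set F' : Filter S := comap Subtype.val F with hF'
  have hmap : map (Subtype.val : S → C(ℝ, X)) F' = F := by
    rw [hF', Filter.map_comap, Subtype.range_coe]
    exact inf_eq_left.mpr hFS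
  have hne' : F'.NeBot := by
    constructor
    intro h
    rw [h, Filter.map_bot] at hmap
    exact hne.ne hmap.symm
  set G : Filter (ℝ × S) := map (fun ψ : S => ((0 : ℝ), ψ)) F' with hG
  have hGne : G.NeBot := hne'.map _
  have htend : Tendsto (evalMap S) G (𝓝 ((0 : ℝ), y)) := by
    rw [hG, Filter.tendsto_map'_iff]
    have : (evalMap S ∘ fun ψ : S => ((0 : ℝ), ψ)) =
        fun ψ : S => ((0 : ℝ), (ψ : C(ℝ, X)) 0) := rfl
    rw [this, nhds_prod_eq]
    refine Tendsto.prodMk tendsto_const_nhds ?_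
    have : (fun ψ : S => (ψ : C(ℝ, X)) 0) =
        (fun φ : C(ℝ, X) => φ 0) ∘ (Subtype.val : S → C(ℝ, X)) := rfl
    rw [this, ← Filter.tendsto_map'_iff, hmap]
    exact hy
  have hclu : MapClusterPt ((0 : ℝ), y) G (evalMap S) := by
    haveI : (map (evalMap S) G).NeBot := hGne.map _
    exact ClusterPt.of_le_nhds htend
  obtain ⟨⟨t₀, ψ⟩, heq, hcl⟩ := (properMap_evalMap hcpt).clusterPt_of_mapClusterPt hclu
  have ht₀ : t₀ = 0 := congrArg Prod.fst heq
  subst ht₀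
  have hψ0 : (ψ : C(ℝ, X)) 0 = y := congrArg Prod.snd heq
  refine ⟨ψ, ψ.2, hψ0, ?_⟩
  have h1 : ClusterPt ψ F' := by
    have := hcl.map (f := Prod.snd) continuous_snd.continuousAt tendsto_map
    rwa [hG, Filter.map_map, show ((Prod.snd ∘ fun ψ : S => ((0 : ℝ), ψ)) = id) from rfl,
      Filter.map_id] at this
  have := h1.map (f := (Subtype.val : S → C(ℝ, X))) continuous_subtype_val.continuousAt
    tendsto_map
  rwa [hmap] at this

lemma closure_subset {S : Set C(ℝ, X)} (hcpt : CompactnessAxiom S) : closure S ⊆ S := by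
  intro φ hφ
  have hne : (𝓝 φ ⊓ 𝓟 S).NeBot := mem_closure_iff_clusterPt.mp hφ
  obtain ⟨ψ, hψS, _, hcl⟩ := exists_clusterPt hcpt (F := 𝓝 φ ⊓ 𝓟 S) inf_le_right
    (((continuous_eval_const (0 : ℝ)).tendsto φ).mono_left inf_le_left)
  have : ψ = φ := eq_of_nhds_neBot (hcl.mono inf_le_left)
  rwa [← this]

lemma shift_mem_omegaSet {B : Set C(ℝ, X)} (r : ℝ) {φ : C(ℝ, X)} (hφ : φ ∈ omegaSet B) :
    shift r φ ∈ omegaSet B := by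
  simp only [omegaSet, mem_iInter] at hφ ⊢
  intro t ht
  have ht' : max (t - r) 1 ∈ Set.Ioi (0 : ℝ) := Set.mem_Ioi.mpr (lt_of_lt_of_le one_pos (le_max_right _ _))
  have h1 := hφ _ ht'
  have h2 : shift r '' closure (⋃ s ∈ Set.Ici (max (t - r) 1), shift s '' B) ⊆
      closure (⋃ s ∈ Set.Ici t, shift s '' B) := by
    refine (image_closure_subset_closure_image (continuous_shift r)).trans (closure_mono ?_)
    rintro _ ⟨_, hψ, rfl⟩
    rw [Set.mem_iUnion₂] at hψ
    obtain ⟨s, hs, χ, hχ, rfl⟩ := hψ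
    have hsr : s + r ∈ Set.Ici t := by
      have h3 := Set.mem_Ici.mp hs; have h4 := le_max_left (t - r) 1
      simp only [Set.mem_Ici]; linarith
    exact Set.mem_biUnion hsr ⟨χ, hχ, (shift_shift r s χ).symm⟩
  exact h2 ⟨φ, h1, rfl⟩

lemma shift_mem_alphaSet {B : Set C(ℝ, X)} (r : ℝ) {φ : C(ℝ, X)} (hφ : φ ∈ alphaSet B) :
    shift r φ ∈ alphaSet B := by
  simp only [alphaSet, mem_iInter] at hφ ⊢
  intro t ht
  have ht' : min (t - r) (-1) ∈ Set.Iio (0 : ℝ) := by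
    have := min_le_right (t - r) (-1); simp only [Set.mem_Iio]; linarith
  have h1 := hφ _ ht'
  have h2 : shift r '' closure (⋃ s ∈ Set.Iic (min (t - r) (-1)), shift s '' B) ⊆
      closure (⋃ s ∈ Set.Iic t, shift s '' B) := by
    refine (image_closure_subset_closure_image (continuous_shift r)).trans (closure_mono ?_)
    rintro _ ⟨_, hψ, rfl⟩
    rw [Set.mem_iUnion₂] at hψ
    obtain ⟨s, hs, χ, hχ, rfl⟩ := hψ
    have hsr : s + r ∈ Set.Iic t := by
      have h3 := Set.mem_Iic.mp hs; have h4 := min_le_left (t - r) (-1)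
      simp only [Set.mem_Iic]; linarith
    exact Set.mem_biUnion hsr ⟨χ, hχ, (shift_shift r s χ).symm⟩
  exact h2 ⟨φ, h1, rfl⟩

lemma omegaSet_subset {S B : Set C(ℝ, X)} (hS : ShiftInvariant S) (hcpt : CompactnessAxiom S)
    (hB : B ⊆ S) : omegaSet B ⊆ S := by
  intro φ hφ
  have h1 : φ ∈ closure (⋃ s ∈ Set.Ici (1 : ℝ), shift s '' B) := by
    simp only [omegaSet, mem_iInter] at hφ
    exact hφ 1 (Set.mem_Ioi.mpr one_pos)
  refine closure_subset hcpt (closure_mono ?_ h1)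
  rintro _ hψ
  simp only [mem_iUnion] at hψ
  obtain ⟨s, _, χ, hχ, rfl⟩ := hψ
  exact hS s χ (hB hχ)

lemma alphaSet_subset {S B : Set C(ℝ, X)} (hS : ShiftInvariant S) (hcpt : CompactnessAxiom S)
    (hB : B ⊆ S) : alphaSet B ⊆ S := by
  intro φ hφ
  have h1 : φ ∈ closure (⋃ s ∈ Set.Iic (-1 : ℝ), shift s '' B) := by
    simp only [alphaSet, mem_iInter] at hφ
    exact hφ (-1) (Set.mem_Iio.mpr (by norm_num))
  refine closure_subset hcpt (closure_mono ?_ h1)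
  rintro _ hψ
  simp only [mem_iUnion] at hψ
  obtain ⟨s, _, χ, hχ, rfl⟩ := hψ
  exact hS s χ (hB hχ)

lemma isClosed_pi_image {S W : Set C(ℝ, X)} (hcpt : CompactnessAxiom S) (hWS : W ⊆ S)
    (hW : IsClosed W) : IsClosed ((fun φ : C(ℝ, X) => φ 0) '' W) := by
  refine IsSeqClosed.isClosed ?_
  intro u p hu hup
  choose φ hφW hφ0 using hu
  have hne : (map φ atTop).NeBot := map_neBot
  have hle : map φ atTop ≤ 𝓟 S :=
    le_principal_iff.mpr (mem_map.mpr (Eventually.of_forall fun n => hWS (hφW n)))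
  have htend : Tendsto (fun ψ : C(ℝ, X) => ψ 0) (map φ atTop) (𝓝 p) := by
    rw [Filter.tendsto_map'_iff]
    have : ((fun ψ : C(ℝ, X) => ψ 0) ∘ φ) = u := funext hφ0
    rwa [this]
  obtain ⟨ψ, _, hψ0, hcl⟩ := exists_clusterPt hcpt hle htend
  have hψW : ψ ∈ W := by
    rw [← hW.closure_eq, mem_closure_iff_clusterPt]
    exact hcl.mono (le_principal_iff.mpr (mem_map.mpr (Eventually.of_forall hφW)))
  exact ⟨ψ, hψW, hψ0⟩

lemma isClosed_omegaSet (B : Set C(ℝ, X)) : IsClosed (omegaSet B) :=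
  isClosed_biInter fun _ _ => isClosed_closure

lemma isClosed_alphaSet (B : Set C(ℝ, X)) : IsClosed (alphaSet B) :=
  isClosed_biInter fun _ _ => isClosed_closure

theorem limitSets_closed_weaklyInvariant (S : Set C(ℝ, X)) (hS : ShiftInvariant S)
    (hcpt : CompactnessAxiom S) (x : X) :
    IsClosed (omegaS S x) ∧ WeaklyInvariant S (omegaS S x) ∧
    IsClosed (alphaS S x) ∧ WeaklyInvariant S (alphaS S x) := by
  have hBS : {φ ∈ S | φ 0 = x} ⊆ S := fun φ h => h.1
  have hωS : omegaSet {φ ∈ S | φ 0 = x} ⊆ S := omegaSet_subset hS hcpt hBS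
  have hαS : alphaSet {φ ∈ S | φ 0 = x} ⊆ S := alphaSet_subset hS hcpt hBS
  refine ⟨isClosed_pi_image hcpt hωS (isClosed_omegaSet _), ?_,
    isClosed_pi_image hcpt hαS (isClosed_alphaSet _), ?_⟩
  · rintro y ⟨φ, hφ, rfl⟩
    refine ⟨φ, hωS hφ, rfl, ?_⟩
    rintro _ ⟨r, rfl⟩
    exact ⟨shift r φ, shift_mem_omegaSet r hφ, by simp [shift]⟩
  · rintro y ⟨φ, hφ, rfl⟩
    refine ⟨φ, hαS hφ, rfl, ?_⟩
    rintro _ ⟨r, rfl⟩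
    exact ⟨shift r φ, shift_mem_alphaSet r hφ, by simp [shift]⟩

end AxODE
end
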